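/- For α ∈ (-1/(n-1), 1), the matrix S̄_α = (s-t)·I_n + t·J_n with s = (√(1+(n-1)α) + (n-1)√(1-α))/n and t = (√(1+(n-1)α) - √(1-α))/n is symmetric positive definite and satisfies S̄_α² = G_α; i.e., S̄_α is the principal square root of G_α. -/

import Mathlib

open Matrix

noncomputable def Gmat (n : ℕ) (α : ℝ) : Matrix (Fin n) (Fin n) ℝ :=
  (1 - α) • (1 : Matrix (Fin n) (Fin n) ℝ) + α • (Matrix.of fun _ _ => (1 : ℝ))

/-- `S̄_α = (s-t)•I + t•J` with the given `s`, `t`. -/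
noncomputable def Sbar (n : ℕ) (α : ℝ) : Matrix (Fin n) (Fin n) ℝ :=
  let s : ℝ := (Real.sqrt (1 + ((n : ℝ) - 1) * α) + ((n : ℝ) - 1) * Real.sqrt (1 - α)) / n
  let t : ℝ := (Real.sqrt (1 + ((n : ℝ) - 1) * α) - Real.sqrt (1 - α)) / n
  (s - t) • (1 : Matrix (Fin n) (Fin n) ℝ) + t • (Matrix.of fun _ _ => (1 : ℝ))

/-- `S̄_α` is symmetric positive definite and squares to `G_α`: it is the
principal square root of `G_α`. -/
theorem stmt11 (n : ℕ) (hn : 1 ≤ n) (α : ℝ)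
    (hα₁ : -1 / ((n : ℝ) - 1) < α) (hα₂ : α < 1) :
    (Sbar n α).IsSymm ∧ (Sbar n α).PosDef ∧ Sbar n α * Sbar n α = Gmat n α := by
  have hnR : (1:ℝ) ≤ (n:ℝ) := by exact_mod_cast hn
  have hn0 : (n:ℝ) ≠ 0 := by positivity
  have ha2 : (0:ℝ) < 1 - α := by linarith
  have hb2 : (0:ℝ) < 1 + ((n : ℝ) - 1) * α := by
    rcases eq_or_lt_of_le hnR with h | h
    · rw [← h]; norm_num
    · have h1 : (0:ℝ) < (n:ℝ) - 1 := by linarith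
      have := (div_lt_iff₀ h1).mp hα₁
      nlinarith
  set a : ℝ := Real.sqrt (1 - α) with ha_def
  set b : ℝ := Real.sqrt (1 + ((n : ℝ) - 1) * α) with hb_def
  have ha : 0 < a := Real.sqrt_pos.mpr ha2
  have hb : 0 < b := Real.sqrt_pos.mpr hb2
  have hasq : a ^ 2 = 1 - α := Real.sq_sqrt ha2.le
  have hbsq : b ^ 2 = 1 + ((n : ℝ) - 1) * α := Real.sq_sqrt hb2.le
  set t : ℝ := (b - a) / n with ht_def
  set J : Matrix (Fin n) (Fin n) ℝ := Matrix.of fun _ _ => (1 : ℝ) with hJ_def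
  have hst : (b + ((n : ℝ) - 1) * a) / n - (b - a) / n = a := by field_simp; ring
  have hS : Sbar n α = a • (1 : Matrix (Fin n) (Fin n) ℝ) + t • J := by
    rw [Sbar, hst]
  have hJJ : J * J = (n : ℝ) • J := by
    ext i j
    simp [hJ_def, Matrix.mul_apply]
  have hsymm : (Sbar n α).IsSymm := by
    rw [hS]
    ext i j
    simp [Matrix.one_apply, hJ_def, Matrix.transpose_apply]
    rcases eq_or_ne i j with h | h
    · simp [h]
    · simp [h, Ne.symm h]
  refine ⟨hsymm, ?_, ?_⟩
  · rw [Matrix.posDef_iff_dotProduct_mulVec]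
    constructor
    · exact hsymm
    · intro x hx
      have hmv : (Sbar n α) *ᵥ x = fun i => a * x i + t * ∑ j, x j := by
        rw [hS]
        ext i
        simp [Matrix.mulVec, dotProduct, Matrix.one_apply, hJ_def, mul_add,
          Finset.sum_add_distrib, Finset.mul_sum, Finset.sum_mul, mul_comm]
      rw [hmv]
      have hform : dotProduct (star x) (fun i => a * x i + t * ∑ j, x j)
          = a * (∑ i, x i ^ 2) + t * (∑ i, x i) ^ 2 := by
        simp only [dotProduct, star_trivial]
        rw [Finset.sum_congr rfl
          (fun i _ => show x i * (a * x i + t * ∑ j, x j)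
            = a * x i ^ 2 + (t * ∑ j, x j) * x i by ring)]
        rw [Finset.sum_add_distrib, ← Finset.mul_sum, ← Finset.mul_sum]
        ring
      rw [hform]
      obtain ⟨i, hi⟩ := Function.ne_iff.mp hx
      have hS2 : 0 < ∑ i, x i ^ 2 := by
        apply Finset.sum_pos' (fun j _ => sq_nonneg _)
        exact ⟨i, Finset.mem_univ i,
          lt_of_le_of_ne (sq_nonneg _) (Ne.symm (pow_ne_zero 2 hi))⟩
      have hCS : (∑ i, x i) ^ 2 ≤ (n : ℝ) * ∑ i, x i ^ 2 := by
        have := sq_sum_le_card_mul_sum_sq (s := (Finset.univ : Finset (Fin n))) (f := x)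
        simpa using this
      have htn : t * n = b - a := by rw [ht_def]; field_simp
      rcases le_or_gt 0 t with ht | ht
      · nlinarith [sq_nonneg (∑ i, x i)]
      · nlinarith [mul_le_mul_of_nonpos_left hCS ht.le]
  · rw [hS]
    have expand : (a • (1 : Matrix (Fin n) (Fin n) ℝ) + t • J) * (a • 1 + t • J)
        = (a * a) • (1 : Matrix (Fin n) (Fin n) ℝ) + (a * t + t * a + t * t * n) • J := by
      simp only [add_mul, mul_add, Matrix.smul_mul, Matrix.mul_smul, hJJ, mul_one, one_mul]
      module
    rw [expand, Gmat]
    congr 1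
    · congr 1; linear_combination hasq
    · congr 1
      have htn : t * n = b - a := by rw [ht_def]; field_simp
      have h1 : a * t + t * a + t * t * n = t * (a + a + t * n) := by ring
      rw [h1, htn, ht_def, div_mul_eq_mul_div, div_eq_iff hn0]
      linear_combination hbsq - hasq
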